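/- Let V be a C² solution of V''(x) + H(x,V(x),V'(x)) = 0 on [c,d] with V(d) = V_d and V'(d) ≤ V_d/d. Then x·V'(x) − V(x) ≤ 0 for all x ∈ [c,d]. -/

import Mathlib

theorem stmt_9 (c d Vd : ℝ) (hc : 0 < c) (hcd : c ≤ d) (p q : ℝ → ℝ)
    (hp : ∀ x ∈ Set.Icc c d, 0 ≤ p x) (hq : ∀ x ∈ Set.Icc c d, 0 ≤ q x)
    (V : ℝ → ℝ) (hV : ContDiff ℝ 2 V)
    (hsol : ∀ x ∈ Set.Icc c d,
      deriv (deriv V) x +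
        (p x * x ^ 2 - Real.sqrt ((p x) ^ 2 * x ^ 4 +
          4 * x ^ 3 * q x * |x * deriv V x - V x|)) / (2 * x ^ 3) = 0)
    (hVd : V d = Vd) (hVd' : deriv V d ≤ Vd / d) :
    ∀ x ∈ Set.Icc c d, x * deriv V x - V x ≤ 0 := by
  have hd : 0 < d := lt_of_lt_of_le hc hcd
  have hVdiff : Differentiable ℝ V := hV.differentiable (by norm_num)
  have hV1 : ContDiff ℝ 1 (deriv V) := by
    have := (contDiff_succ_iff_deriv (n := 1)).mp (by exact_mod_cast hV)
    exact this.2.2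
  have hV'diff : Differentiable ℝ (deriv V) := hV1.differentiable one_ne_zero
  -- second derivative nonneg on Icc
  have hconv : ∀ x ∈ Set.Icc c d, 0 ≤ deriv (deriv V) x := by
    intro x hx
    have hxpos : 0 < x := lt_of_lt_of_le hc hx.1
    have hsqrt : p x * x ^ 2 ≤ Real.sqrt ((p x) ^ 2 * x ^ 4 +
        4 * x ^ 3 * q x * |x * deriv V x - V x|) := by
      rw [show (p x) ^ 2 * x ^ 4 = (p x * x ^ 2) ^ 2 by ring]
      have h1 : 0 ≤ 4 * x ^ 3 * q x * |x * deriv V x - V x| :=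
        mul_nonneg (mul_nonneg (by positivity) (hq x hx)) (abs_nonneg _)
      calc p x * x ^ 2 = Real.sqrt ((p x * x ^ 2) ^ 2) := by
            rw [Real.sqrt_sq (mul_nonneg (hp x hx) (by positivity))]
        _ ≤ _ := Real.sqrt_le_sqrt (by linarith)
    have := hsol x hx
    have h2 : 0 < 2 * x ^ 3 := by positivity
    nlinarith [div_nonpos_of_nonpos_of_nonneg (by linarith :
      p x * x ^ 2 - Real.sqrt ((p x) ^ 2 * x ^ 4 +
        4 * x ^ 3 * q x * |x * deriv V x - V x|) ≤ 0) h2.le]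
  -- g x = x * V' x - V x is monotone on Icc
  set g : ℝ → ℝ := fun x => x * deriv V x - V x with hg
  have hgderiv : ∀ x : ℝ, HasDerivAt g (x * deriv (deriv V) x) x := by
    intro x
    have h1 : HasDerivAt (fun x => x * deriv V x)
        (1 * deriv V x + x * deriv (deriv V) x) x :=
      (hasDerivAt_id x).mul (hV'diff x).hasDerivAt
    have h2 := h1.sub (hVdiff x).hasDerivAt
    exact h2.congr_deriv (by ring)
  have hmono : MonotoneOn g (Set.Icc c d) := by
    apply monotoneOn_of_deriv_nonneg (convex_Icc c d)
    · exact (continuous_id.mul hV'diff.continuous).sub hVdiff.continuous |>.continuousOn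
    · intro x hx
      exact (hgderiv x).differentiableAt.differentiableWithinAt
    · intro x hx
      rw [interior_Icc] at hx
      rw [(hgderiv x).deriv]
      have hxpos : 0 < x := lt_of_lt_of_le hc hx.1.le
      exact mul_nonneg hxpos.le (hconv x ⟨hx.1.le, hx.2.le⟩)
  have hgd : g d ≤ 0 := by
    have : d * deriv V d ≤ d * (Vd / d) := by
      exact mul_le_mul_of_nonneg_left hVd' hd.le
    rw [mul_div_cancel₀ _ hd.ne'] at this
    simp only [hg, hVd]
    linarith
  intro x hx
  have := hmono hx (Set.right_mem_Icc.mpr hcd) hx.2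
  calc x * deriv V x - V x = g x := rfl
    _ ≤ g d := this
    _ ≤ 0 := hgd
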